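/- arXiv:1509.05355 — 7 statements merged into one kernel-verified Lean document; each statement's English description precedes it below -/
import Mathlib

section
/- Let Φ(ξ,η) = ξ₁/|ξ|² − (ξ₁−η₁)/|ξ−η|² − η₁/|η|² for ξ, η ∈ ℝ² with ξ, η, ξ−η nonzero. Then the magnitude of the gradient of Φ in η satisfies |∇_η Φ(ξ,η)| = |ξ−2η|·|ξ| / (|ξ−η|²·|η|²). -/
open InnerProductSpace


lemma normsq_eq (x : EuclideanSpace ℝ (Fin 2)) : ‖x‖ ^ 2 = x 0 ^ 2 + x 1 ^ 2 := by
  rw [EuclideanSpace.norm_eq, Real.sq_sqrt (by positivity)]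
  simp [Fin.sum_univ_two, Real.norm_eq_abs, sq_abs]

lemma key_alg (a b c d A B : ℝ) (hA : A = (a-c)^2+(b-d)^2) (hB : B = c^2+d^2)
    (hA0 : A ≠ 0) (hB0 : B ≠ 0) :
    ((A⁻¹ - B⁻¹) - 2*(a-c)/A^2*(a-c) + 2*c/B^2*c)^2
      + (-(2*(a-c)/A^2*(b-d)) + 2*c/B^2*d)^2
    = ((a-2*c)^2+(b-2*d)^2) * (a^2+b^2) / (A^2*B^2) := by
  have h1 : (A⁻¹ - B⁻¹) - 2*(a-c)/A^2*(a-c) + 2*c/B^2*c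
      = (A*B^2 - 2*(a-c)^2*B^2 - A^2*B + 2*c^2*A^2)/(A^2*B^2) := by
    field_simp; try ring
  have h2 : -(2*(a-c)/A^2*(b-d)) + 2*c/B^2*d
      = (-(2*(a-c)*(b-d)*B^2) + 2*c*d*A^2)/(A^2*B^2) := by
    field_simp; try ring
  rw [h1, h2, div_pow, div_pow, ← add_div]
  have h3 : (A*B^2 - 2*(a-c)^2*B^2 - A^2*B + 2*c^2*A^2)^2
        + (-(2*(a-c)*(b-d)*B^2) + 2*c*d*A^2)^2
      = ((a-2*c)^2+(b-2*d)^2) * (a^2+b^2) * (A^2*B^2) := by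
    subst hA hB; ring
  rw [h3, pow_two (A^2*B^2),
    mul_div_mul_right _ _ (mul_ne_zero (pow_ne_zero 2 hA0) (pow_ne_zero 2 hB0))]

/-- The β-plane phase function Φ(ξ,η) = ξ₁/|ξ|² − (ξ₁−η₁)/|ξ−η|² − η₁/|η|². -/
noncomputable def Phi (ξ η : EuclideanSpace ℝ (Fin 2)) : ℝ :=
  ξ 0 / ‖ξ‖ ^ 2 - (ξ 0 - η 0) / ‖ξ - η‖ ^ 2 - η 0 / ‖η‖ ^ 2

/-- |∇_η Φ(ξ,η)| = |ξ−2η|·|ξ| / (|ξ−η|²·|η|²). -/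
theorem norm_gradient_eta_Phi (ξ η : EuclideanSpace ℝ (Fin 2))
    (hξ : ξ ≠ 0) (hη : η ≠ 0) (hξη : ξ ≠ η) :
    ‖gradient (fun η' => Phi ξ η') η‖ =
      ‖ξ - (2 : ℝ) • η‖ * ‖ξ‖ / (‖ξ - η‖ ^ 2 * ‖η‖ ^ 2) := by
  have hξη' : ξ - η ≠ 0 := sub_ne_zero.mpr hξη
  have hA0 : ‖ξ - η‖ ^ 2 ≠ 0 := pow_ne_zero 2 (norm_ne_zero_iff.mpr hξη')
  have hB0 : ‖η‖ ^ 2 ≠ 0 := pow_ne_zero 2 (norm_ne_zero_iff.mpr hη)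
  set G : EuclideanSpace ℝ (Fin 2) :=
    ((‖ξ - η‖ ^ 2)⁻¹ - (‖η‖ ^ 2)⁻¹) • EuclideanSpace.single 0 (1 : ℝ)
      - (2 * (ξ 0 - η 0) / (‖ξ - η‖ ^ 2) ^ 2) • (ξ - η)
      + (2 * (η 0) / (‖η‖ ^ 2) ^ 2) • η with hGdef
  -- derivatives
  have hsub : HasFDerivAt (fun y : EuclideanSpace ℝ (Fin 2) => ξ - y)
      (-(ContinuousLinearMap.id ℝ _)) η := (hasFDerivAt_id η).const_sub ξ
  have hN1 : HasFDerivAt (fun y : EuclideanSpace ℝ (Fin 2) => ‖ξ - y‖ ^ 2)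
      ((2 : ℕ) • (innerSL ℝ (ξ - η)).comp (-(ContinuousLinearMap.id ℝ _))) η := hsub.norm_sq
  have hinv1 : HasFDerivAt (fun y : EuclideanSpace ℝ (Fin 2) => (‖ξ - y‖ ^ 2)⁻¹)
      ((-((‖ξ - η‖ ^ 2) ^ 2)⁻¹) •
        ((2 : ℕ) • (innerSL ℝ (ξ - η)).comp (-(ContinuousLinearMap.id ℝ _)))) η :=
    (hasDerivAt_inv hA0).comp_hasFDerivAt η hN1
  have hp1 : HasFDerivAt (fun y : EuclideanSpace ℝ (Fin 2) => ξ 0 - y 0)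
      (-(EuclideanSpace.proj (0 : Fin 2) : EuclideanSpace ℝ (Fin 2) →L[ℝ] ℝ)) η := by
    have := ((EuclideanSpace.proj (0 : Fin 2) :
        EuclideanSpace ℝ (Fin 2) →L[ℝ] ℝ).hasFDerivAt (x := η)).const_sub (ξ 0)
    simpa [PiLp.proj_apply] using this
  have hf1 := hp1.mul hinv1
  have hN2 : HasFDerivAt (fun y : EuclideanSpace ℝ (Fin 2) => ‖y‖ ^ 2)
      ((2 : ℕ) • (innerSL ℝ η).comp (ContinuousLinearMap.id ℝ _)) η :=
    (hasFDerivAt_id η).norm_sq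
  have hinv2 : HasFDerivAt (fun y : EuclideanSpace ℝ (Fin 2) => (‖y‖ ^ 2)⁻¹)
      ((-((‖η‖ ^ 2) ^ 2)⁻¹) •
        ((2 : ℕ) • (innerSL ℝ η).comp (ContinuousLinearMap.id ℝ _))) η :=
    (hasDerivAt_inv hB0).comp_hasFDerivAt η hN2
  have hp2 : HasFDerivAt (fun y : EuclideanSpace ℝ (Fin 2) => y 0)
      (EuclideanSpace.proj (0 : Fin 2) : EuclideanSpace ℝ (Fin 2) →L[ℝ] ℝ) η := by
    have := (EuclideanSpace.proj (0 : Fin 2) :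
        EuclideanSpace ℝ (Fin 2) →L[ℝ] ℝ).hasFDerivAt (x := η)
    simpa [PiLp.proj_apply] using this
  have hf2 := hp2.mul hinv2
  have hPhi := ((hasFDerivAt_const (ξ 0 / ‖ξ‖ ^ 2) η).sub hf1).sub hf2
  have hPhi' : HasFDerivAt (fun η' => Phi ξ η') _ η :=
    hPhi.congr_of_eventuallyEq (Filter.Eventually.of_forall fun y => by
      simp [Phi, div_eq_mul_inv])
  have hGrad : HasGradientAt (fun η' => Phi ξ η') G η := by
    rw [hasGradientAt_iff_hasFDerivAt]
    refine hPhi'.congr_fderiv (Eq.symm ?_)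
    refine ContinuousLinearMap.ext fun v => ?_
    rw [InnerProductSpace.toDual_apply_apply]
    simp only [hGdef, inner_add_left, inner_sub_left, real_inner_smul_left,
      EuclideanSpace.inner_single_left, RCLike.star_def, conj_trivial,
      ContinuousLinearMap.coe_sub', ContinuousLinearMap.coe_smul',
      ContinuousLinearMap.add_apply, ContinuousLinearMap.sub_apply,
      ContinuousLinearMap.smul_apply, ContinuousLinearMap.coe_comp',
      ContinuousLinearMap.neg_apply, ContinuousLinearMap.id_apply,
      ContinuousLinearMap.zero_apply, ContinuousLinearMap.smulRight_apply,
      innerSL_apply_apply, Function.comp_apply, PiLp.proj_apply,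
      smul_eq_mul, nsmul_eq_mul, Nat.cast_ofNat, inner_neg_right, Pi.smul_apply]
    ring
  rw [hGrad.gradient]
  have hs : ∀ x : EuclideanSpace ℝ (Fin 2), ‖x‖ = Real.sqrt (x 0 ^ 2 + x 1 ^ 2) := fun x => by
    rw [EuclideanSpace.norm_eq]
    congr 1
    simp [Fin.sum_univ_two, Real.norm_eq_abs, sq_abs]
  have hA : ‖ξ - η‖ ^ 2 = (ξ 0 - η 0) ^ 2 + (ξ 1 - η 1) ^ 2 := by
    rw [normsq_eq]; simp
  have hB : ‖η‖ ^ 2 = η 0 ^ 2 + η 1 ^ 2 := normsq_eq η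
  have h0 : G 0 = ((‖ξ - η‖ ^ 2)⁻¹ - (‖η‖ ^ 2)⁻¹)
      - 2 * (ξ 0 - η 0) / (‖ξ - η‖ ^ 2) ^ 2 * (ξ 0 - η 0)
      + 2 * (η 0) / (‖η‖ ^ 2) ^ 2 * (η 0) := by
    simp [hGdef, EuclideanSpace.single_apply]
  have h1 : G 1 = -(2 * (ξ 0 - η 0) / (‖ξ - η‖ ^ 2) ^ 2 * (ξ 1 - η 1))
      + 2 * (η 0) / (‖η‖ ^ 2) ^ 2 * (η 1) := by
    simp [hGdef, EuclideanSpace.single_apply]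
  have e0 : (ξ - (2 : ℝ) • η) 0 = ξ 0 - 2 * η 0 := by simp
  have e1 : (ξ - (2 : ℝ) • η) 1 = ξ 1 - 2 * η 1 := by simp
  rw [hs G, hs (ξ - (2 : ℝ) • η), hs ξ, h0, h1, e0, e1,
    key_alg (ξ 0) (ξ 1) (η 0) (η 1) (‖ξ - η‖ ^ 2) (‖η‖ ^ 2) hA hB hA0 hB0,
    show (‖ξ - η‖ ^ 2) ^ 2 * (‖η‖ ^ 2) ^ 2 = (‖ξ - η‖ ^ 2 * ‖η‖ ^ 2) ^ 2 by ring,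
    Real.sqrt_div (by positivity) _, Real.sqrt_sq (by positivity),
    Real.sqrt_mul (by positivity) _]
end

section
/- Let Φ(ξ,η) = ξ₁/|ξ|² − (ξ₁−η₁)/|ξ−η|² − η₁/|η|² for ξ, η ∈ ℝ² with ξ, η, ξ−η nonzero. Then |∇_ξ Φ(ξ,η)| = |η−2ξ|·|η| / (|ξ−η|²·|ξ|²), and consequently the ratio satisfies |∇_ξΦ|/|∇_ηΦ| = (|η−2ξ|·|η|³)/(|ξ−2η|·|ξ|³) whenever additionally ξ ≠ 2η. -/
open InnerProductSpace

local notation "E2" => EuclideanSpace ℝ (Fin 2)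

noncomputable def Gfun (x : E2) : E2 :=
  (‖x‖ ^ 2)⁻¹ • EuclideanSpace.single 0 (1 : ℝ) - ((2 * x 0) / ‖x‖ ^ 4) • x

lemma norm_eq2 (x : E2) : ‖x‖ = Real.sqrt ((x 0) ^ 2 + (x 1) ^ 2) := by
  rw [EuclideanSpace.norm_eq]
  simp [Fin.sum_univ_two, Real.norm_eq_abs, sq_abs]

lemma norm_sq2 (x : E2) : ‖x‖ ^ 2 = (x 0) ^ 2 + (x 1) ^ 2 := by
  rw [norm_eq2, Real.sq_sqrt (by positivity)]

lemma sum_sq_pos (x : E2) (hx : x ≠ 0) : 0 < (x 0) ^ 2 + (x 1) ^ 2 := by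
  have h := norm_pos_iff.mpr hx
  nlinarith [norm_sq2 x]

lemma hasGradientAt_g (x : E2) (hx : x ≠ 0) :
    HasGradientAt (fun y : E2 => y 0 / ‖y‖ ^ 2) (Gfun x) x := by
  have hns : ‖x‖ ^ 2 ≠ 0 := pow_ne_zero 2 (norm_ne_zero_iff.mpr hx)
  rw [hasGradientAt_iff_hasFDerivAt]
  have h1 : HasFDerivAt (fun y : E2 => y 0) (EuclideanSpace.proj (0 : Fin 2) : E2 →L[ℝ] ℝ) x := by
    simpa using (EuclideanSpace.proj (0 : Fin 2) : E2 →L[ℝ] ℝ).hasFDerivAt (x := x)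
  have h2 : HasFDerivAt (fun y : E2 => ‖y‖ ^ 2)
      (2 • (innerSL ℝ x : E2 →L[ℝ] ℝ)) x := by
    simpa using (hasFDerivAt_id x).norm_sq
  have h3 : HasFDerivAt (fun y : E2 => (‖y‖ ^ 2)⁻¹)
      ((-((‖x‖ ^ 2) ^ 2)⁻¹) • (2 • (innerSL ℝ x : E2 →L[ℝ] ℝ))) x :=
    (hasDerivAt_inv hns).comp_hasFDerivAt x h2
  have h := h1.mul h3
  simp only [div_eq_mul_inv]
  refine h.congr_fderiv ?_
  ext y
  simp only [Gfun, InnerProductSpace.toDual_apply_apply, inner_sub_left, real_inner_smul_left,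
    ContinuousLinearMap.coe_smul', ContinuousLinearMap.coe_sub', Pi.smul_apply, Pi.sub_apply,
    EuclideanSpace.inner_single_left, map_one, one_mul, smul_eq_mul,
    innerSL_apply_apply]
  simp only [ContinuousLinearMap.add_apply, ContinuousLinearMap.smul_apply, innerSL_apply_apply,
    PiLp.proj_apply, smul_eq_mul]
  have hx4 : ‖x‖ ^ 4 = ‖x‖ ^ 2 * ‖x‖ ^ 2 := by ring
  rw [hx4]
  field_simp
  ring

lemma sqrt_helper (L P Q D1 D2 : ℝ) (hP : 0 ≤ P) (hQ : 0 ≤ Q) (h1 : 0 < D1) (h2 : 0 < D2)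
    (h : L = P * Q / (D1 * D2) ^ 2) :
    Real.sqrt L = Real.sqrt P * Real.sqrt Q / (D1 * D2) := by
  have hsq : (Real.sqrt P * Real.sqrt Q / (D1 * D2)) ^ 2 = P * Q / (D1 * D2) ^ 2 := by
    rw [div_pow, mul_pow, Real.sq_sqrt hP, Real.sq_sqrt hQ]
  rw [h, ← hsq, Real.sqrt_sq (by positivity)]

lemma frac_helper (n0 n1 K da dab : ℝ) (hda : da ≠ 0) (hdab : dab ≠ 0)
    (h : n0 ^ 2 + n1 ^ 2 = K * da ^ 2 * dab ^ 2) :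
    (n0 / (da ^ 2 * dab ^ 2)) ^ 2 + (n1 / (da ^ 2 * dab ^ 2)) ^ 2 = K / (dab * da) ^ 2 := by
  rw [div_pow, div_pow, ← add_div, h]
  field_simp

lemma norm4 (x : E2) : ‖x‖ ^ 4 = ((x 0) ^ 2 + (x 1) ^ 2) ^ 2 := by
  rw [show (4 : ℕ) = 2 * 2 from rfl, pow_mul, norm_sq2]

set_option maxHeartbeats 1000000 in
lemma key (a b : E2) (ha : a ≠ 0) (hab : a ≠ b) :
    ‖Gfun a - Gfun (a - b)‖ =
      ‖b - (2 : ℝ) • a‖ * ‖b‖ / (‖a - b‖ ^ 2 * ‖a‖ ^ 2) := by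
  have hab' : a - b ≠ 0 := sub_ne_zero.mpr hab
  have hDa := sum_sq_pos a ha
  have hDab := sum_sq_pos (a - b) hab'
  set A := a 0 with hA
  set B := a 1 with hB
  set C := b 0 with hC
  set D := b 1 with hD
  have hab0 : (a - b) 0 = A - C := rfl
  have hab1 : (a - b) 1 = B - D := rfl
  have hb0 : (b - (2 : ℝ) • a) 0 = C - 2 * A := by
    simp [PiLp.sub_apply, PiLp.smul_apply, smul_eq_mul]
    rfl
  have hb1 : (b - (2 : ℝ) • a) 1 = D - 2 * B := by
    simp [PiLp.sub_apply, PiLp.smul_apply, smul_eq_mul]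
    rfl
  rw [hab0, hab1] at hDab
  have hda : A ^ 2 + B ^ 2 ≠ 0 := ne_of_gt hDa
  have hdab : (A - C) ^ 2 + (B - D) ^ 2 ≠ 0 := ne_of_gt hDab
  have c0 : (Gfun a - Gfun (a - b)) 0 =
      ((A^2+B^2)*((A-C)^2+(B-D)^2)^2 - 2*A*A*((A-C)^2+(B-D)^2)^2
        - (A^2+B^2)^2*((A-C)^2+(B-D)^2) + 2*(A-C)^2*(A^2+B^2)^2)
      / ((A^2+B^2) ^ 2 * ((A-C)^2+(B-D)^2) ^ 2) := by
    simp only [Gfun, PiLp.sub_apply, PiLp.smul_apply, EuclideanSpace.single_apply,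
      smul_eq_mul, norm_sq2, norm4, ← hA, ← hB, ← hC, ← hD, hab0, hab1]
    norm_num
    field_simp
    ring
  have c1 : (Gfun a - Gfun (a - b)) 1 =
      (-(2*A*B*((A-C)^2+(B-D)^2)^2) + 2*(A-C)*(B-D)*(A^2+B^2)^2)
      / ((A^2+B^2) ^ 2 * ((A-C)^2+(B-D)^2) ^ 2) := by
    simp only [Gfun, PiLp.sub_apply, PiLp.smul_apply, EuclideanSpace.single_apply,
      smul_eq_mul, norm_sq2, norm4, ← hA, ← hB, ← hC, ← hD, hab0, hab1]
    norm_num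
    field_simp
  rw [norm_eq2 (Gfun a - Gfun (a - b)), norm_eq2 (b - (2 : ℝ) • a), norm_eq2 b,
    norm_sq2 (a - b), norm_sq2 a, c0, c1, hb0, hb1, hab0, hab1, ← hA, ← hB, ← hC, ← hD]
  refine sqrt_helper _ _ _ _ _ (by positivity) (by positivity) hDab hDa ?_
  refine frac_helper _ _ _ _ _ hda hdab ?_
  ring


lemma grad_xi (ξ η : E2) (hξ : ξ ≠ 0) (hξη : ξ ≠ η) :
    HasGradientAt (fun ξ' : E2 => Phi ξ' η) (Gfun ξ - Gfun (ξ - η)) ξ := by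
  have hξη' : ξ - η ≠ 0 := sub_ne_zero.mpr hξη
  have hfun : (fun ξ' : E2 => Phi ξ' η) =
      fun ξ' : E2 => ξ' 0 / ‖ξ'‖ ^ 2 - (ξ' - η) 0 / ‖ξ' - η‖ ^ 2 - η 0 / ‖η‖ ^ 2 := by
    funext ξ'
    simp [Phi, PiLp.sub_apply]
  rw [hfun, hasGradientAt_iff_hasFDerivAt]
  have hA : HasFDerivAt (fun y : E2 => y 0 / ‖y‖ ^ 2) (InnerProductSpace.toDual ℝ E2 (Gfun ξ)) ξ :=
    (hasGradientAt_g ξ hξ).hasFDerivAt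
  have hinner : HasFDerivAt (fun ξ' : E2 => ξ' - η) (ContinuousLinearMap.id ℝ E2) ξ :=
    (hasFDerivAt_id ξ).sub_const η
  have hB : HasFDerivAt (fun ξ' : E2 => (ξ' - η) 0 / ‖ξ' - η‖ ^ 2)
      ((InnerProductSpace.toDual ℝ E2 (Gfun (ξ - η))).comp (ContinuousLinearMap.id ℝ E2)) ξ :=
    by have := ((hasGradientAt_g (ξ - η) hξη').hasFDerivAt).comp ξ hinner; exact this
  have h := (hA.sub hB).sub_const (η 0 / ‖η‖ ^ 2)
  refine h.congr_fderiv ?_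
  ext y
  simp [inner_sub_left]

lemma grad_eta (ξ η : E2) (hη : η ≠ 0) (hξη : ξ ≠ η) :
    HasGradientAt (fun η' : E2 => Phi ξ η') (Gfun (ξ - η) - Gfun η) η := by
  have hξη' : ξ - η ≠ 0 := sub_ne_zero.mpr hξη
  have hfun : (fun η' : E2 => Phi ξ η') =
      fun η' : E2 => ξ 0 / ‖ξ‖ ^ 2 - (ξ - η') 0 / ‖ξ - η'‖ ^ 2 - η' 0 / ‖η'‖ ^ 2 := by
    funext η'
    simp [Phi, PiLp.sub_apply]
  rw [hfun, hasGradientAt_iff_hasFDerivAt]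
  have hinner : HasFDerivAt (fun η' : E2 => ξ - η') (-(ContinuousLinearMap.id ℝ E2)) η :=
    (hasFDerivAt_id η).const_sub ξ
  have hC : HasFDerivAt (fun η' : E2 => (ξ - η') 0 / ‖ξ - η'‖ ^ 2)
      ((InnerProductSpace.toDual ℝ E2 (Gfun (ξ - η))).comp (-(ContinuousLinearMap.id ℝ E2))) η :=
    ((hasGradientAt_g (ξ - η) hξη').hasFDerivAt).comp η hinner
  have hD : HasFDerivAt (fun y : E2 => y 0 / ‖y‖ ^ 2) (InnerProductSpace.toDual ℝ E2 (Gfun η)) η :=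
    (hasGradientAt_g η hη).hasFDerivAt
  have h := ((hasFDerivAt_const (ξ 0 / ‖ξ‖ ^ 2) η).sub hC).sub hD
  refine h.congr_fderiv ?_
  ext y
  simp [inner_sub_left, inner_neg_right]


/-- |∇_ξ Φ(ξ,η)| = |η−2ξ|·|η| / (|ξ−η|²·|ξ|²), and consequently
|∇_ξΦ|/|∇_ηΦ| = (|η−2ξ|·|η|³)/(|ξ−2η|·|ξ|³) whenever additionally ξ ≠ 2η. -/
theorem norm_gradient_xi_Phi (ξ η : EuclideanSpace ℝ (Fin 2))
    (hξ : ξ ≠ 0) (hη : η ≠ 0) (hξη : ξ ≠ η) :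
    ‖gradient (fun ξ' => Phi ξ' η) ξ‖ =
      ‖η - (2 : ℝ) • ξ‖ * ‖η‖ / (‖ξ - η‖ ^ 2 * ‖ξ‖ ^ 2) ∧
    (ξ ≠ (2 : ℝ) • η →
      ‖gradient (fun ξ' => Phi ξ' η) ξ‖ / ‖gradient (fun η' => Phi ξ η') η‖ =
        (‖η - (2 : ℝ) • ξ‖ * ‖η‖ ^ 3) / (‖ξ - (2 : ℝ) • η‖ * ‖ξ‖ ^ 3)) := by
  have h1 : gradient (fun ξ' => Phi ξ' η) ξ = Gfun ξ - Gfun (ξ - η) :=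
    (grad_xi ξ η hξ hξη).gradient
  have h2 : gradient (fun η' => Phi ξ η') η = Gfun (ξ - η) - Gfun η :=
    (grad_eta ξ η hη hξη).gradient
  have n1 : ‖Gfun ξ - Gfun (ξ - η)‖ = ‖η - (2 : ℝ) • ξ‖ * ‖η‖ / (‖ξ - η‖ ^ 2 * ‖ξ‖ ^ 2) :=
    key ξ η hξ hξη
  constructor
  · rw [h1, n1]
  · intro h2η
    have hab : (ξ - η) ≠ (ξ - (2 : ℝ) • η) := by
      intro h
      apply hη
      have : (ξ - η) - (ξ - (2 : ℝ) • η) = η := by module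
      rw [h, sub_self] at this
      exact this.symm
    have e1 : (ξ - η) - (ξ - (2 : ℝ) • η) = η := by module
    have n2 : ‖Gfun (ξ - η) - Gfun η‖ =
        ‖ξ‖ * ‖ξ - (2 : ℝ) • η‖ / (‖η‖ ^ 2 * ‖ξ - η‖ ^ 2) := by
      have := key (ξ - η) (ξ - (2 : ℝ) • η) (sub_ne_zero.mpr hξη) hab
      rw [e1] at this
      rw [this]
      have e2 : (ξ - (2 : ℝ) • η) - (2 : ℝ) • (ξ - η) = -ξ := by module
      rw [e2, norm_neg]
    rw [h1, h2, n1, n2]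
    have hS : (0 : ℝ) < ‖ξ - η‖ ^ 2 := pow_pos (norm_pos_iff.mpr (sub_ne_zero.mpr hξη)) 2
    have hX : (0 : ℝ) < ‖ξ‖ := norm_pos_iff.mpr hξ
    have hY : (0 : ℝ) < ‖η‖ := norm_pos_iff.mpr hη
    have hK2 : (0 : ℝ) < ‖ξ - (2 : ℝ) • η‖ := norm_pos_iff.mpr (sub_ne_zero.mpr h2η)
    have hS1 : ‖ξ - η‖ ≠ 0 := norm_ne_zero_iff.mpr (sub_ne_zero.mpr hξη)
    field_simp
end

section
/- Let Φ(ξ,η) = ξ₁/|ξ|² − (ξ₁−η₁)/|ξ−η|² − η₁/|η|². Suppose η ≠ 0 and |ξ−2η| ≤ |η|/1000. Then |Φ(ξ,η)| ≥ ((6/10)|ξ₁| − (2/1000)|η₁|)/|η|². -/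
set_option maxHeartbeats 1000000

lemma phi_key (a b c x y : ℝ) (hc : 0 < c) (ha : |a - 2*c| ≤ c/1000)
    (hb : |b - c| ≤ c/1000) :
    ((6/10) * |x| - (2/1000) * |y|) / c^2 ≤ |x / a^2 - (x - y) / b^2 - y / c^2| := by
  obtain ⟨ha1, ha2⟩ := abs_le.mp ha
  obtain ⟨hb1, hb2⟩ := abs_le.mp hb
  have ha0 : 0 < a := by linarith
  have hb0 : 0 < b := by linarith
  have ha2p : (0:ℝ) < a^2 := by positivity
  have hb2p : (0:ℝ) < b^2 := by positivity
  have hc2p : (0:ℝ) < c^2 := by positivity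
  have haU : a^2 ≤ (2001/1000)^2*c^2 := by nlinarith
  have haL : (1999/1000)^2*c^2 ≤ a^2 := by nlinarith
  have hbU : b^2 ≤ (1001/1000)^2*c^2 := by nlinarith
  have hbL : (999/1000)^2*c^2 ≤ b^2 := by nlinarith
  have hab : a^2*b^2 ≤ (2001/1000)^2*(1001/1000)^2*(c^2*c^2) := by
    nlinarith [mul_le_mul haU hbU hb2p.le (by positivity : (0:ℝ) ≤ (2001/1000)^2*c^2)]
  have hd : 2994/1000*c^2 ≤ a^2 - b^2 := by nlinarith
  -- bound on 1/b^2 - 1/a^2 from below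
  have hA : (74/100) / c^2 ≤ 1/b^2 - 1/a^2 := by
    have e : 1/b^2 - 1/a^2 = (a^2-b^2)/(a^2*b^2) := by
      rw [div_sub_div _ _ hb2p.ne' ha2p.ne', one_mul, mul_one, mul_comm (b^2) (a^2)]
    rw [e, div_le_div_iff₀ hc2p (by positivity)]
    nlinarith [mul_le_mul_of_nonneg_right hd hc2p.le]
  have hApos : (0:ℝ) ≤ 1/b^2 - 1/a^2 := le_trans (by positivity) hA
  -- bound on |1/b^2 - 1/c^2| from above
  have hB : |1/b^2 - 1/c^2| ≤ (201/100000) / c^2 := by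
    have e : 1/b^2 - 1/c^2 = (c^2-b^2)/(b^2*c^2) := by
      rw [div_sub_div _ _ hb2p.ne' hc2p.ne', one_mul, mul_one]
    have hbc : (0:ℝ) < b^2*c^2 := by positivity
    rw [e, abs_div, abs_of_pos hbc, div_le_div_iff₀ hbc hc2p]
    have h3 : |c^2-b^2| ≤ 2001/1000000*c^2 := by
      rw [abs_le]; constructor <;> nlinarith
    have h4 : (999/1000)^2*c^2*c^2 ≤ b^2*c^2 := mul_le_mul_of_nonneg_right hbL hc2p.le
    have h3c := mul_le_mul_of_nonneg_right h3 hc2p.le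
    nlinarith [h3c, h4]
  -- lower bound on |Φ|
  have hsplit : x / a^2 - (x - y) / b^2 - y / c^2
      = x*(1/a^2 - 1/b^2) - (-(y*(1/b^2 - 1/c^2))) := by ring
  have hlow : |x| * (1/b^2 - 1/a^2) - |y| * |1/b^2 - 1/c^2|
      ≤ |x / a^2 - (x - y) / b^2 - y / c^2| := by
    rw [hsplit]
    have h5 := abs_sub_abs_le_abs_sub (x*(1/a^2 - 1/b^2)) (-(y*(1/b^2 - 1/c^2)))
    have e1 : |x*(1/a^2 - 1/b^2)| = |x| * (1/b^2 - 1/a^2) := by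
      rw [abs_mul, abs_of_nonpos (by linarith : 1/a^2 - 1/b^2 ≤ 0)]; ring
    have e2 : |(-(y*(1/b^2 - 1/c^2)))| = |y| * |1/b^2 - 1/c^2| := by
      rw [abs_neg, abs_mul]
    linarith
  rcases le_or_gt ((6/10) * |x|) ((2/1000) * |y|) with h1 | h1
  · have h0 : ((6/10) * |x| - (2/1000) * |y|) / c^2 ≤ 0 :=
      div_nonpos_iff.mpr (Or.inr ⟨by linarith, hc2p.le⟩)
    exact le_trans h0 (abs_nonneg _)
  · have hy : |y| < 300 * |x| := by linarith
    have t1 : |x| * ((74/100)/c^2) ≤ |x| * (1/b^2 - 1/a^2) :=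
      mul_le_mul_of_nonneg_left hA (abs_nonneg x)
    have t2 : |y| * |1/b^2 - 1/c^2| ≤ |y| * ((201/100000)/c^2) :=
      mul_le_mul_of_nonneg_left hB (abs_nonneg y)
    have t3 : ((6/10) * |x| - (2/1000) * |y|) / c^2
        ≤ |x| * ((74/100)/c^2) - |y| * ((201/100000)/c^2) := by
      have e3 : |x| * ((74/100)/c^2) - |y| * ((201/100000)/c^2)
          = ((74/100) * |x| - (201/100000) * |y|) / c^2 := by ring
      rw [e3]
      exact (div_le_div_iff_of_pos_right hc2p).mpr (by linarith [abs_nonneg x])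
    linarith

/-- If η ≠ 0 and |ξ−2η| ≤ |η|/1000, then |Φ(ξ,η)| ≥ ((6/10)|ξ₁| − (2/1000)|η₁|)/|η|². -/
theorem Phi_lower_bound (ξ η : EuclideanSpace ℝ (Fin 2)) (hη : η ≠ 0)
    (h : ‖ξ - (2 : ℝ) • η‖ ≤ ‖η‖ / 1000) :
    ((6 / 10) * |ξ 0| - (2 / 1000) * |η 0|) / ‖η‖ ^ 2 ≤ |Phi ξ η| := by
  unfold Phi
  have hc : 0 < ‖η‖ := norm_pos_iff.mpr hη
  have h2η : ‖(2:ℝ)•η‖ = 2*‖η‖ := by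
    rw [norm_smul]; simp
  have ha : |‖ξ‖ - 2*‖η‖| ≤ ‖η‖/1000 := by
    have := abs_norm_sub_norm_le ξ ((2:ℝ)•η)
    rw [h2η] at this
    linarith
  have hb : |‖ξ - η‖ - ‖η‖| ≤ ‖η‖/1000 := by
    have e : ξ - η - η = ξ - (2:ℝ)•η := by
      rw [two_smul]; abel
    have := abs_norm_sub_norm_le (ξ - η) η
    rw [e] at this
    linarith
  exact phi_key _ _ _ _ _ hc ha hb
end

section
/- Let Φ(ξ,η) = ξ₁/|ξ|² − (ξ₁−η₁)/|ξ−η|² − η₁/|η|². Suppose η ≠ 0, |ξ−2η| ≤ |η|/1000, and |ξ₁| ≥ |η₁|/100. Then |Φ(ξ,η)| ≥ |ξ₁|/(2|η|²). -/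
lemma coord_abs_le_norm (v : EuclideanSpace ℝ (Fin 2)) : |v 0| ≤ ‖v‖ := by
  rw [EuclideanSpace.norm_eq, Fin.sum_univ_two]
  have h0 : |v 0| = Real.sqrt (|v 0| ^ 2) := by
    rw [Real.sqrt_sq (abs_nonneg _)]
  rw [h0]
  apply Real.sqrt_le_sqrt
  simp only [Real.norm_eq_abs]
  nlinarith [sq_nonneg (v 1), sq_abs (v 0), sq_abs (v 1)]

set_option maxHeartbeats 1600000 in
/-- If η ≠ 0, |ξ−2η| ≤ |η|/1000 and |ξ₁| ≥ |η₁|/100, then |Φ(ξ,η)| ≥ |ξ₁|/(2|η|²). -/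
theorem Phi_lower_bound' (ξ η : EuclideanSpace ℝ (Fin 2)) (hη : η ≠ 0)
    (h : ‖ξ - (2 : ℝ) • η‖ ≤ ‖η‖ / 1000) (h1 : |η 0| / 100 ≤ |ξ 0|) :
    |ξ 0| / (2 * ‖η‖ ^ 2) ≤ |Phi ξ η| := by
  set x := ξ 0 with hx
  set y := η 0 with hy
  have hr : (0:ℝ) < ‖η‖ := norm_pos_iff.mpr hη
  set r := ‖η‖ with hrdef
  set s := ‖ξ‖ with hsdef
  set t := ‖ξ - η‖ with htdef
  have hs : |s - 2*r| ≤ r/1000 := by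
    have h2 := abs_norm_sub_norm_le ξ ((2:ℝ) • η)
    rw [norm_smul] at h2
    simp only [Real.norm_ofNat] at h2
    linarith [h2.trans h]
  have ht : |t - r| ≤ r/1000 := by
    have he : ξ - η - η = ξ - (2:ℝ) • η := by
      rw [two_smul]; abel
    have h2 := abs_norm_sub_norm_le (ξ - η) η
    rw [he] at h2
    linarith [h2.trans h]
  have hy100 : |y| ≤ 100 * |x| := by linarith
  have hsn : (0:ℝ) ≤ s := norm_nonneg _
  have htn : (0:ℝ) ≤ t := norm_nonneg _
  have hPhi : Phi ξ η = x / s^2 - (x - y) / t^2 - y / r^2 := rfl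
  set P := Phi ξ η with hP
  clear_value x y r s t P
  clear hη h h1 hx hy hrdef hsdef htdef hP ξ η
  -- pure real arithmetic from here
  set A := s ^ 2 with hA
  set B := t ^ 2 with hB
  set C := r ^ 2 with hC
  have hCpos : (0:ℝ) < C := by positivity
  have habs := abs_le.mp hs
  have htabs := abs_le.mp ht
  have hA2 : 3.99 * C ≤ A := by rw [hA, hC]; nlinarith [habs.1, hr]
  have hB2 : 0.99 * C ≤ B := by rw [hB, hC]; nlinarith [htabs.1, hr]
  have hApos : (0:ℝ) < A := by linarith
  have hBpos : (0:ℝ) < B := by linarith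
  have hA1 : |4*C - A| ≤ C/200 := by
    rw [abs_sub_comm]
    have hfac : A - 4*C = (s - 2*r) * (s + 2*r) := by rw [hA, hC]; ring
    have hb : |A - 4*C| ≤ (r/1000) * (4*r + r/1000) := by
      rw [hfac, abs_mul]
      apply mul_le_mul hs ?_ (abs_nonneg _) (by positivity)
      rw [abs_of_nonneg (by linarith)]
      linarith [habs.2]
    have he : (r/1000) * (4*r + r/1000) = (4001/1000000)*r^2 := by ring
    rw [hC]; linarith [sq_nonneg r]
  have hB1 : |C - B| ≤ (2001/1000000)*C := by
    rw [abs_sub_comm]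
    have hfac : B - C = (t - r) * (t + r) := by rw [hB, hC]; ring
    have hb : |B - C| ≤ (r/1000) * (2*r + r/1000) := by
      rw [hfac, abs_mul]
      apply mul_le_mul ht ?_ (abs_nonneg _) (by positivity)
      rw [abs_of_nonneg (by linarith)]
      linarith [htabs.2]
    have he : (r/1000) * (2*r + r/1000) = (2001/1000000)*r^2 := by ring
    rw [hC]; linarith
  clear_value A B C
  clear hA hB hC hs ht habs htabs hsn htn hr s t
  have hCne : C ≠ 0 := ne_of_gt hCpos
  have hPhi2 : P + (3/4)*x/C = x*((4*C - A)/(4*A*C)) - (x-y)*((C-B)/(B*C)) := by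
    rw [hPhi]
    field_simp
    ring
  have hxylt : |x - y| ≤ 101 * |x| := by
    calc |x - y| ≤ |x| + |y| := abs_sub _ _
      _ ≤ 101 * |x| := by linarith
  have ht1 : |x*((4*C - A)/(4*A*C))| ≤ (1/3192) * (|x|/C) := by
    rw [abs_mul, abs_div]
    rw [abs_of_pos (by positivity : (0:ℝ) < 4*A*C)]
    calc |x| * (|4*C - A| / (4*A*C))
        ≤ |x| * ((C/200) / (4*(3.99*C)*C)) := by
          apply mul_le_mul_of_nonneg_left _ (abs_nonneg x)
          apply div_le_div₀ (by positivity) hA1 (by positivity)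
          nlinarith
      _ = (1/3192) * (|x|/C) := by field_simp; ring
  have ht2 : |(x-y)*((C-B)/(B*C))| ≤ (101*2001/990000) * (|x|/C) := by
    rw [abs_mul, abs_div]
    rw [abs_of_pos (by positivity : (0:ℝ) < B*C)]
    calc |x - y| * (|C - B| / (B*C))
        ≤ (101*|x|) * (((2001/1000000)*C) / ((0.99*C)*C)) := by
          apply mul_le_mul hxylt
          · apply div_le_div₀ (by positivity) hB1 (by positivity)
            nlinarith
          · positivity
          · positivity
      _ = (101*2001/990000) * (|x|/C) := by field_simp; ring
  have key : |P + (3/4)*x/C| ≤ (1/4) * (|x|/C) := by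
    rw [hPhi2]
    calc |x*((4*C - A)/(4*A*C)) - (x-y)*((C-B)/(B*C))|
        ≤ |x*((4*C - A)/(4*A*C))| + |(x-y)*((C-B)/(B*C))| := abs_sub _ _
      _ ≤ (1/3192) * (|x|/C) + (101*2001/990000) * (|x|/C) := add_le_add ht1 ht2
      _ ≤ (1/4) * (|x|/C) := by
          have hxc : (0:ℝ) ≤ |x|/C := by positivity
          nlinarith
  have hmain : |(3/4)*x/C| = (3/4) * (|x|/C) := by
    rw [abs_div, abs_mul, abs_of_pos hCpos]
    norm_num [mul_div_assoc]
  have htri : |(3/4)*x/C| - |P + (3/4)*x/C| ≤ |P| := by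
    have h3 : |(3/4)*x/C| ≤ |P + (3/4)*x/C| + |P| := by
      calc |(3/4)*x/C| = |(P + (3/4)*x/C) + (-P)| := by congr 1; ring
        _ ≤ |P + (3/4)*x/C| + |-P| := abs_add_le _ _
        _ = |P + (3/4)*x/C| + |P| := by rw [abs_neg]
    linarith
  rw [hmain] at htri
  have h2 : |x|/(2*C) = (3/4)*(|x|/C) - (1/4)*(|x|/C) := by ring
  rw [h2]
  linarith
end

section
/- Let m(ξ,η) = (ξ₂η₁ − ξ₁η₂)/|η|² and Φ(ξ,η) = ξ₁/|ξ|² − (ξ₁−η₁)/|ξ−η|² − η₁/|η|². Suppose ξ, η ∈ ℝ² satisfy η ≠ 0, |ξ−2η| ≤ |η|/1000, |ξ₁| ≥ |η₁|/100, |η|/100 ≤ |ξ| ≤ 100|η|, and |η|/10000 ≤ |ξ−η| ≤ 10000|η|. Then there is an absolute constant C > 0 with |m(ξ,η)| / |Φ(ξ,η)| ≤ C|η|. -/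
/-- The null-form multiplier m(ξ,η) = (ξ₂η₁ − ξ₁η₂)/|η|². -/
noncomputable def nullForm (ξ η : EuclideanSpace ℝ (Fin 2)) : ℝ :=
  (ξ 1 * η 0 - ξ 0 * η 1) / ‖η‖ ^ 2

lemma abs_comp_le (x : EuclideanSpace ℝ (Fin 2)) (i : Fin 2) : |x i| ≤ ‖x‖ := by
  rw [EuclideanSpace.norm_eq, ← Real.sqrt_sq_eq_abs]
  apply Real.sqrt_le_sqrt
  have : |x i| ^ 2 ≤ ∑ j, ‖x j‖ ^ 2 := by
    apply Finset.single_le_sum (f := fun j => ‖x j‖^2) (fun j _ => by positivity)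
      (Finset.mem_univ i) |>.trans_eq' ?_
    simp [sq_abs]
  simpa [sq_abs] using this

set_option maxHeartbeats 2000000 in
/-- In Region 1, Case 2, Subcase A: there is an absolute constant C > 0 with
|m(ξ,η)|/|Φ(ξ,η)| ≤ C|η|. -/
theorem nullForm_div_Phi_bound :
    ∃ C > (0 : ℝ), ∀ ξ η : EuclideanSpace ℝ (Fin 2), η ≠ 0 →
      ‖ξ - (2 : ℝ) • η‖ ≤ ‖η‖ / 1000 →
      |η 0| / 100 ≤ |ξ 0| →
      ‖η‖ / 100 ≤ ‖ξ‖ → ‖ξ‖ ≤ 100 * ‖η‖ →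
      ‖η‖ / 10000 ≤ ‖ξ - η‖ → ‖ξ - η‖ ≤ 10000 * ‖η‖ →
      |nullForm ξ η| / |Phi ξ η| ≤ C * ‖η‖ := by
  refine ⟨500, by norm_num, fun ξ η hη h2n hXY hξl hξu hml hmu => ?_⟩
  set r : ℝ := ‖η‖ with hr
  set a : ℝ := ‖ξ‖ with ha
  set b : ℝ := ‖ξ - η‖ with hb
  have hr0 : 0 < r := norm_pos_iff.2 hη
  -- norm bounds
  have h2norm : ‖(2:ℝ) • η‖ = 2 * r := by rw [norm_smul]; simp [hr]
  have ha_lb : 1.999 * r ≤ a := by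
    have := norm_sub_norm_le ((2:ℝ) • η) ξ
    rw [norm_sub_rev] at this
    have h := le_trans this h2n
    rw [h2norm] at h
    linarith
  have hdecomp : ξ - η = (ξ - (2:ℝ) • η) + η := by rw [two_smul]; abel
  have hb_ub : b ≤ 1.001 * r := by
    have := norm_add_le (ξ - (2:ℝ) • η) η
    rw [← hdecomp] at this
    simp only [← hb, ← hr] at this
    linarith
  have hb_lb : 0.999 * r ≤ b := by
    have h : η = (ξ - η) - (ξ - (2:ℝ) • η) := by rw [two_smul]; abel
    have := norm_sub_le (ξ - η) (ξ - (2:ℝ) • η)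
    rw [← h] at this
    simp only [← hb, ← hr] at this
    linarith
  have ha0 : 0 < a := by linarith
  have hb0 : 0 < b := by linarith
  -- component bounds
  set X : ℝ := ξ 0 with hX
  set Y : ℝ := η 0 with hYdef
  have hY : |Y| ≤ 100 * |X| := by linarith [hXY]
  have hc0 : |X - 2 * Y| ≤ r / 1000 := by
    have := (abs_comp_le (ξ - (2:ℝ) • η) 0).trans h2n
    simpa [PiLp.sub_apply, PiLp.smul_apply, smul_eq_mul, ← hX, ← hYdef] using this
  have hc1 : |ξ 1 - 2 * η 1| ≤ r / 1000 := by
    have := (abs_comp_le (ξ - (2:ℝ) • η) 1).trans h2n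
    simpa [PiLp.sub_apply, PiLp.smul_apply, smul_eq_mul] using this
  have hη1 : |η 1| ≤ r := abs_comp_le η 1
  -- u, v bounds
  set u : ℝ := r ^ 2 / a ^ 2 with hu
  set v : ℝ := r ^ 2 / b ^ 2 with hv
  have hu_ub : u ≤ 0.2504 := by
    rw [hu, div_le_iff₀ (by positivity)]
    nlinarith [mul_nonneg (sub_nonneg.2 ha_lb) (by linarith : (0:ℝ) ≤ a + 1.999 * r)]
  have hv_lb : 0.997 ≤ v := by
    rw [hv, le_div_iff₀ (by positivity)]
    nlinarith [mul_nonneg (sub_nonneg.2 hb_ub) (by linarith : (0:ℝ) ≤ 1.001 * r + b)]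
  have hv_ub : v ≤ 1.003 := by
    rw [hv, div_le_iff₀ (by positivity)]
    nlinarith [mul_nonneg (sub_nonneg.2 hb_lb) (by linarith : (0:ℝ) ≤ b + 0.999 * r)]
  -- key identity
  set P : ℝ := Phi ξ η with hP
  have hid : r ^ 2 * P = X * (u - v) + Y * (v - 1) := by
    rw [hP, Phi, ← hX, ← hYdef, ← ha, ← hb, ← hr, hu, hv]
    field_simp
    ring
  -- lower bound on |P|
  have habs : |X * (u - v) + Y * (v - 1)| = r ^ 2 * |P| := by
    rw [← hid, abs_mul, abs_of_pos (by positivity : (0:ℝ) < r ^ 2)]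
  have hXP : |X| ≤ 2.4 * (r ^ 2 * |P|) := by
    have e2 : |X * (u - v)| ≤ |X * (u - v) + Y * (v - 1)| + |Y * (v - 1)| := by
      calc |X * (u - v)| = |(X * (u - v) + Y * (v - 1)) - Y * (v - 1)| := by ring_nf
        _ ≤ _ := abs_sub _ _
    rw [habs] at e2
    have e3 : |Y * (v - 1)| ≤ 100 * |X| * 0.003 := by
      rw [abs_mul]
      have hv3 : |v - 1| ≤ 0.003 := abs_le.2 ⟨by linarith, by linarith⟩
      exact le_trans (mul_le_mul hY hv3 (abs_nonneg _) (by positivity)) (le_of_eq rfl)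
    have e1 : |X| * 0.7466 ≤ |X * (u - v)| := by
      rw [abs_mul]
      have : (0.7466 : ℝ) ≤ |u - v| := by
        rw [abs_sub_comm]
        calc (0.7466 : ℝ) ≤ v - u := by linarith
          _ ≤ |v - u| := le_abs_self _
      exact mul_le_mul_of_nonneg_left this (abs_nonneg X)
    linarith [abs_nonneg X]
  -- numerator bound for m
  have hnum : |ξ 1 * Y - X * η 1| ≤ 202 * r * |X| := by
    have heq : ξ 1 * Y - X * η 1 = (ξ 1 - 2 * η 1) * Y + (-(X - 2 * Y)) * η 1 := by ring
    calc |ξ 1 * Y - X * η 1| ≤ |(ξ 1 - 2 * η 1) * Y| + |(-(X - 2 * Y)) * η 1| := by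
          rw [heq]; exact abs_add_le _ _
      _ = |ξ 1 - 2 * η 1| * |Y| + |X - 2 * Y| * |η 1| := by rw [abs_mul, abs_mul, abs_neg]
      _ ≤ (r / 1000) * (100 * |X|) + (|X| + 2 * (100 * |X|)) * r := by
          have h1 : |X - 2 * Y| ≤ |X| + 2 * (100 * |X|) := by
            have h2 : |X - 2 * Y| ≤ |X| + |2 * Y| := abs_sub _ _
            have h3 : |2 * Y| = 2 * |Y| := by rw [abs_mul]; norm_num
            linarith
          have t1 : |ξ 1 - 2 * η 1| * |Y| ≤ (r / 1000) * (100 * |X|) :=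
            mul_le_mul hc1 hY (abs_nonneg _) (by positivity)
          have t2 : |X - 2 * Y| * |η 1| ≤ (|X| + 2 * (100 * |X|)) * r :=
            mul_le_mul h1 hη1 (abs_nonneg _) (by positivity)
          linarith
      _ ≤ 202 * r * |X| := by nlinarith [mul_nonneg hr0.le (abs_nonneg X)]
  -- conclude
  have hnf : |nullForm ξ η| = |ξ 1 * Y - X * η 1| / r ^ 2 := by
    rw [nullForm, abs_div, ← hX, ← hYdef, ← hr, abs_of_pos (by positivity : (0:ℝ) < r ^ 2)]
  by_cases hP0 : P = 0
  · rw [hP0, abs_zero] at hXP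
    have hX0' : X = 0 := abs_eq_zero.1 (le_antisymm (by linarith) (abs_nonneg X))
    have hY0 : Y = 0 := by
      have : |Y| ≤ 0 := by rw [hX0'] at hY; simpa using hY
      exact abs_eq_zero.1 (le_antisymm this (abs_nonneg _))
    rw [hnf, hX0', hY0]
    simp
    positivity
  · rw [div_le_iff₀ (abs_pos.2 hP0), hnf, div_le_iff₀ (by positivity : (0:ℝ) < r ^ 2)]
    calc |ξ 1 * Y - X * η 1| ≤ 202 * r * |X| := hnum
      _ ≤ 202 * r * (2.4 * (r ^ 2 * |P|)) := by
          exact mul_le_mul_of_nonneg_left hXP (by positivity)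
      _ ≤ 500 * r * |P| * r ^ 2 := by
          nlinarith [mul_nonneg (mul_nonneg hr0.le hr0.le) (mul_nonneg hr0.le (abs_nonneg P))]
end

section
/- Suppose ξ, η ∈ ℝ² with η ≠ 0 satisfy |ξ−2η| ≤ |η|/1000 and |ξ₁| < |η₁|/100. Then |ξ·η^⊥| = |ξ₂η₁ − ξ₁η₂| satisfies (1/2)|η₁||η| ≤ |ξ·η^⊥| ≤ 4|η₁||η|. -/
/-- If η ≠ 0, |ξ−2η| ≤ |η|/1000 and |ξ₁| < |η₁|/100, then
(1/2)|η₁||η| ≤ |ξ·η^⊥| = |ξ₂η₁ − ξ₁η₂| ≤ 4|η₁||η|. -/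
theorem nullForm_numerator_bounds (ξ η : EuclideanSpace ℝ (Fin 2)) (hη : η ≠ 0)
    (h : ‖ξ - (2 : ℝ) • η‖ ≤ ‖η‖ / 1000) (h1 : |ξ 0| < |η 0| / 100) :
    (1 / 2) * |η 0| * ‖η‖ ≤ |ξ 1 * η 0 - ξ 0 * η 1| ∧
      |ξ 1 * η 0 - ξ 0 * η 1| ≤ 4 * |η 0| * ‖η‖ := by
  set a := ξ 0 with ha'
  set b := ξ 1 with hb'
  set p := η 0 with hp'
  set q := η 1 with hq'
  set N := ‖η‖ with hN'
  set M := ‖ξ - (2:ℝ) • η‖ with hM'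
  have hNpos : 0 < N := norm_pos_iff.mpr hη
  have hMnonneg : 0 ≤ M := norm_nonneg _
  have hN2 : N ^ 2 = p ^ 2 + q ^ 2 := by
    have := EuclideanSpace.norm_eq η
    rw [Fin.sum_univ_two] at this
    rw [hN', this, Real.sq_sqrt (by positivity)]
    simp [sq_abs]
    rfl
  have hM2 : M ^ 2 = (a - 2*p) ^ 2 + (b - 2*q) ^ 2 := by
    have := EuclideanSpace.norm_eq (ξ - (2:ℝ) • η)
    rw [Fin.sum_univ_two] at this
    rw [hM', this, Real.sq_sqrt (by positivity)]
    have e0 : (ξ - (2:ℝ) • η) 0 = a - 2*p := by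
      simp [ha', hp', PiLp.sub_apply, PiLp.smul_apply]
    have e1 : (ξ - (2:ℝ) • η) 1 = b - 2*q := by
      simp [hb', hq', PiLp.sub_apply, PiLp.smul_apply]
    rw [e0, e1]
    simp [sq_abs]
  have ha : |a - 2*p| ≤ N / 1000 := by
    have h2 : |a - 2*p| ≤ M := by
      nlinarith [sq_nonneg (b - 2*q), abs_nonneg (a - 2*p), sq_abs (a - 2*p)]
    linarith
  have hb : |b - 2*q| ≤ N / 1000 := by
    have h2 : |b - 2*q| ≤ M := by
      nlinarith [sq_nonneg (a - 2*p), abs_nonneg (b - 2*q), sq_abs (b - 2*q)]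
    linarith
  have hqN : |q| ≤ N := by
    nlinarith [sq_abs q, abs_nonneg q, sq_nonneg p]
  -- |p| < N/1990
  have hpN : |p| < N / 1990 := by
    have h2 : 2 * |p| - |a| ≤ |a - 2*p| := by
      have := abs_sub_abs_le_abs_sub (2*p) a
      rw [abs_mul] at this
      simp only [abs_two] at this
      have : |2*p| - |a| ≤ |2*p - a| := abs_sub_abs_le_abs_sub (2*p) a
      rw [abs_sub_comm] at this
      rw [abs_mul] at this
      simpa using this
    linarith
  have hqlow : 0.99 * N ≤ |q| := by
    nlinarith [sq_abs q, sq_abs p, abs_nonneg q, abs_nonneg p]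
  have hbup : |b| ≤ 2 * |q| + N / 1000 := by
    have := abs_sub_abs_le_abs_sub b (2*q)
    rw [abs_mul, abs_two] at this
    linarith
  have hblow : 2 * |q| - N / 1000 ≤ |b| := by
    have := abs_sub_abs_le_abs_sub (2*q) b
    rw [abs_sub_comm, abs_mul, abs_two] at this
    linarith
  have hupper : |b * p - a * q| ≤ |b| * |p| + |a| * |q| := by
    calc |b * p - a * q| ≤ |b * p| + |a * q| := abs_sub _ _
    _ = |b| * |p| + |a| * |q| := by rw [abs_mul, abs_mul]
  have hlower : |b| * |p| - |a| * |q| ≤ |b * p - a * q| := by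
    have := abs_sub_abs_le_abs_sub (b*p) (a*q)
    rw [abs_mul, abs_mul] at this
    linarith
  have hanneg : 0 ≤ |a| := abs_nonneg a
  have hpnneg : 0 ≤ |p| := abs_nonneg p
  have t1 : (2 * |q| - N / 1000) * |p| ≤ |b| * |p| :=
    mul_le_mul_of_nonneg_right hblow hpnneg
  have t1' : |b| * |p| ≤ (2 * |q| + N / 1000) * |p| :=
    mul_le_mul_of_nonneg_right hbup hpnneg
  have t2 : |a| * |q| ≤ |p| / 100 * N := by
    calc |a| * |q| ≤ |p| / 100 * |q| :=
          mul_le_mul_of_nonneg_right h1.le (abs_nonneg q)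
      _ ≤ |p| / 100 * N := by
          apply mul_le_mul_of_nonneg_left hqN; positivity
  have t3 : 0.99 * N * |p| ≤ |q| * |p| := mul_le_mul_of_nonneg_right hqlow hpnneg
  have t3' : |q| * |p| ≤ N * |p| := mul_le_mul_of_nonneg_right hqN hpnneg
  have t4 : 0 ≤ N * |p| := mul_nonneg hNpos.le hpnneg
  constructor
  · linarith [t1, t2, t3, hlower]
  · linarith [t1', t2, t3', t4, hupper]
end

section
/- Let Φ(ξ,η) = ξ₁/|ξ|² − (ξ₁−η₁)/|ξ−η|² − η₁/|η|². Suppose ξ, η ∈ ℝ² with η ≠ 0 satisfy |ξ−2η| ≤ |η|/1000 and |ξ₁| < |η₁|/100. Then the partial derivative in the second coordinate of η satisfies |∂_{η₂}Φ(ξ,η)| ≥ |η₁|·|η| / (4|ξ−η|⁴). -/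
set_option maxHeartbeats 2000000 in
lemma key_ineq (n0 n2 x0 x2 r a : ℝ) (hr : 0 < r) (ha0 : 0 < a)
    (hr2 : n0 ^ 2 + n2 ^ 2 = r ^ 2)
    (har : |a - r| ≤ r / 1000)
    (hd : (x0 - 2 * n0) ^ 2 + (x2 - 2 * n2) ^ 2 ≤ (r / 1000) ^ 2)
    (h1 : |x0| ≤ |n0| / 100) :
    |n0| * r ^ 5 / 4 ≤ |2 * n0 * n2 * a ^ 4 - 2 * (x0 - n0) * (x2 - n2) * r ^ 4| := by
  set S := 2 * n0 * n2 * a ^ 4 - 2 * (x0 - n0) * (x2 - n2) * r ^ 4 with hS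
  set A := 4 * n0 * n2 * r ^ 4 with hA
  have hr4 : (0:ℝ) < r ^ 4 := by positivity
  have hE : |x2 - 2 * n2| ≤ r / 1000 := by
    nlinarith [sq_abs (x2 - 2*n2), abs_nonneg (x2 - 2*n2), sq_nonneg (x0 - 2*n0)]
  have hE0 : |x0 - 2 * n0| ≤ r / 1000 := by
    nlinarith [sq_abs (x0 - 2*n0), abs_nonneg (x0 - 2*n0), sq_nonneg (x2 - 2*n2)]
  have h2n0 : |2 * n0| ≤ |x0| + |x0 - 2 * n0| := by
    calc |2 * n0| = |x0 - (x0 - 2 * n0)| := by congr 1; ring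
    _ ≤ |x0| + |x0 - 2 * n0| := abs_sub _ _
  have hn0 : |n0| ≤ r / 1990 := by
    rw [abs_mul, abs_two] at h2n0
    linarith
  have hn2 : 99 / 100 * r ≤ |n2| := by
    nlinarith [sq_abs n2, sq_abs n0, abs_nonneg n2, abs_nonneg n0]
  have hn2r : |n2| ≤ r := by
    nlinarith [sq_abs n2, sq_abs n0, abs_nonneg n2, abs_nonneg n0, sq_nonneg n0]
  have haL : r - r / 1000 ≤ a := by have := abs_le.mp har; linarith
  have haU : a ≤ r + r / 1000 := by have := abs_le.mp har; linarith
  have hu4 : a ^ 4 ≤ (1001/1000) ^ 4 * r ^ 4 := by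
    calc a ^ 4 ≤ (1001/1000 * r) ^ 4 := by
          apply pow_le_pow_left₀ ha0.le; linarith
    _ = (1001/1000) ^ 4 * r ^ 4 := by ring
  have hl4 : (999/1000) ^ 4 * r ^ 4 ≤ a ^ 4 := by
    calc (999/1000) ^ 4 * r ^ 4 = (999/1000 * r) ^ 4 := by ring
    _ ≤ a ^ 4 := by apply pow_le_pow_left₀ (by linarith) (by linarith)
  have hT : |a ^ 4 - r ^ 4| ≤ 5 / 1000 * r ^ 4 := by
    rw [abs_le]; norm_num at hu4 hl4 ⊢; constructor <;> linarith
  have hdecomp : A - S = (-2 * n0 * n2) * (a ^ 4 - r ^ 4)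
      + (-2 * n0 * r ^ 4) * (x2 - 2 * n2) + (2 * n2 * r ^ 4) * x0
      + (2 * r ^ 4) * (x0 * (x2 - 2 * n2)) := by
    rw [hS, hA]; ring
  have htri : |A - S| ≤ |(-2 * n0 * n2) * (a ^ 4 - r ^ 4)|
      + |(-2 * n0 * r ^ 4) * (x2 - 2 * n2)| + |(2 * n2 * r ^ 4) * x0|
      + |(2 * r ^ 4) * (x0 * (x2 - 2 * n2))| := by
    rw [hdecomp]
    have t1 := abs_add_le ((-2 * n0 * n2) * (a ^ 4 - r ^ 4)
      + (-2 * n0 * r ^ 4) * (x2 - 2 * n2) + (2 * n2 * r ^ 4) * x0)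
      ((2 * r ^ 4) * (x0 * (x2 - 2 * n2)))
    have t2 := abs_add_le ((-2 * n0 * n2) * (a ^ 4 - r ^ 4)
      + (-2 * n0 * r ^ 4) * (x2 - 2 * n2)) ((2 * n2 * r ^ 4) * x0)
    have t3 := abs_add_le ((-2 * n0 * n2) * (a ^ 4 - r ^ 4))
      ((-2 * n0 * r ^ 4) * (x2 - 2 * n2))
    linarith
  have hb1 : |(-2 * n0 * n2) * (a ^ 4 - r ^ 4)| ≤ 2 * |n0| * (r * (5 / 1000 * r ^ 4)) := by
    rw [abs_mul, abs_mul, abs_mul, show |(-2:ℝ)| = 2 by norm_num]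
    have hm : |n2| * |a ^ 4 - r ^ 4| ≤ r * (5 / 1000 * r ^ 4) :=
      mul_le_mul hn2r hT (abs_nonneg _) hr.le
    have hm2 := mul_le_mul_of_nonneg_left hm (by positivity : (0:ℝ) ≤ 2 * |n0|)
    nlinarith [hm2]
  have hb2 : |(-2 * n0 * r ^ 4) * (x2 - 2 * n2)| ≤ 2 * |n0| * r ^ 4 * (r / 1000) := by
    rw [abs_mul, abs_mul, abs_mul, show |(-2:ℝ)| = 2 by norm_num, abs_of_pos hr4]
    have := mul_le_mul_of_nonneg_left hE (by positivity : (0:ℝ) ≤ 2 * |n0| * r ^ 4)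
    linarith
  have hb3 : |(2 * n2 * r ^ 4) * x0| ≤ 2 * r * r ^ 4 * (|n0| / 100) := by
    rw [abs_mul, abs_mul, abs_mul, abs_two, abs_of_pos hr4]
    have hm : |n2| * |x0| ≤ r * (|n0| / 100) :=
      mul_le_mul hn2r h1 (abs_nonneg _) hr.le
    have := mul_le_mul_of_nonneg_left hm (by positivity : (0:ℝ) ≤ 2 * r ^ 4)
    nlinarith [this]
  have hb4 : |(2 * r ^ 4) * (x0 * (x2 - 2 * n2))| ≤ 2 * r ^ 4 * ((|n0| / 100) * (r / 1000)) := by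
    rw [abs_mul, abs_mul, abs_mul, abs_two, abs_of_pos hr4]
    have hm : |x0| * |x2 - 2 * n2| ≤ |n0| / 100 * (r / 1000) :=
      mul_le_mul h1 hE (abs_nonneg _) (by positivity)
    have := mul_le_mul_of_nonneg_left hm (by positivity : (0:ℝ) ≤ 2 * r ^ 4)
    linarith
  have hAabs : 4 * |n0| * (99 / 100 * r) * r ^ 4 ≤ |A| := by
    rw [hA, abs_mul, abs_mul, abs_mul, show |(4:ℝ)| = 4 by norm_num, abs_of_pos hr4]
    have := mul_le_mul_of_nonneg_left hn2 (by positivity : (0:ℝ) ≤ 4 * |n0|)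
    nlinarith [this, abs_nonneg n0]
  have hfin := abs_sub_abs_le_abs_sub A S
  have hX : (0:ℝ) ≤ |n0| * r ^ 5 := by positivity
  linarith

lemma fderiv_Phi_eval (ξ η : EuclideanSpace ℝ (Fin 2)) (hne : ξ - η ≠ 0) (hη : η ≠ 0) :
    fderiv ℝ (fun η' => Phi ξ η') η (EuclideanSpace.single 1 1) =
      2 * η 0 * η 1 / ‖η‖ ^ 4
        - 2 * (ξ 0 - η 0) * (ξ 1 - η 1) / ‖ξ - η‖ ^ 4 := by
  have hproj : HasFDerivAt (fun η' : EuclideanSpace ℝ (Fin 2) => η' 0)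
      (EuclideanSpace.proj 0 : EuclideanSpace ℝ (Fin 2) →L[ℝ] ℝ) η :=
    (EuclideanSpace.proj (𝕜 := ℝ) (0 : Fin 2)).hasFDerivAt
  have hA : (‖ξ - η‖ ^ 2 : ℝ) ≠ 0 := pow_ne_zero 2 (norm_ne_zero_iff.mpr hne)
  have hB : (‖η‖ ^ 2 : ℝ) ≠ 0 := pow_ne_zero 2 (norm_ne_zero_iff.mpr hη)
  have hnum2 : HasFDerivAt (fun η' : EuclideanSpace ℝ (Fin 2) => ξ 0 - η' 0)
      ((0 : EuclideanSpace ℝ (Fin 2) →L[ℝ] ℝ) - EuclideanSpace.proj 0) η :=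
    (hasFDerivAt_const (ξ 0) η).sub hproj
  have hden2 : HasFDerivAt (fun η' : EuclideanSpace ℝ (Fin 2) => ‖ξ - η'‖ ^ 2)
      (2 • (innerSL ℝ (ξ - η)).comp
        ((0 : EuclideanSpace ℝ (Fin 2) →L[ℝ] EuclideanSpace ℝ (Fin 2))
          - ContinuousLinearMap.id ℝ _)) η :=
    ((hasFDerivAt_const ξ η).sub (hasFDerivAt_id η)).norm_sq
  have hden3 : HasFDerivAt (fun η' : EuclideanSpace ℝ (Fin 2) => ‖η'‖ ^ 2)
      (2 • (innerSL ℝ η).comp (ContinuousLinearMap.id ℝ _)) η :=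
    (hasFDerivAt_id η).norm_sq
  have hinv2 := (hasFDerivAt_inv hA).comp η hden2
  have hinv3 := (hasFDerivAt_inv hB).comp η hden3
  have h2 := hnum2.mul hinv2
  have h3 := hproj.mul hinv3
  have hPhi := ((hasFDerivAt_const (ξ 0 / ‖ξ‖ ^ 2) η).sub h2).sub h3
  have heq : (fun η' => Phi ξ η') = (fun x : EuclideanSpace ℝ (Fin 2) =>
      ξ 0 / ‖ξ‖ ^ 2 - (ξ 0 - x 0) * ((fun x : ℝ => x⁻¹) ∘ fun η' : EuclideanSpace ℝ (Fin 2) => ‖ξ - η'‖ ^ 2) x -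
        x 0 * ((fun x : ℝ => x⁻¹) ∘ fun η' : EuclideanSpace ℝ (Fin 2) => ‖η'‖ ^ 2) x) := by
    funext η'
    simp [Phi, div_eq_mul_inv, Function.comp]
  rw [heq]
  erw [hPhi.fderiv]
  simp only [ContinuousLinearMap.sub_apply, ContinuousLinearMap.add_apply,
    ContinuousLinearMap.smul_apply, ContinuousLinearMap.comp_apply,
    ContinuousLinearMap.coe_sub', ContinuousLinearMap.zero_apply,
    ContinuousLinearMap.coe_id', ContinuousLinearMap.smulRight_apply,
    ContinuousLinearMap.one_apply, innerSL_apply_apply, Pi.sub_apply,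
    smul_eq_mul, id_eq]
  simp only [Function.comp, inner_sub_right, inner_zero_left, smul_eq_mul,
    PiLp.inner_apply, Fin.sum_univ_two, EuclideanSpace.inner_single_right,
    EuclideanSpace.single_apply, RCLike.inner_apply, conj_trivial, PiLp.sub_apply]
  have hca : ‖ξ - η‖ ≠ 0 := norm_ne_zero_iff.mpr hne
  have hcb : ‖η‖ ≠ 0 := norm_ne_zero_iff.mpr hη
  norm_num
  field_simp
  ring

lemma norm_sq_coords (v : EuclideanSpace ℝ (Fin 2)) : ‖v‖ ^ 2 = v 0 ^ 2 + v 1 ^ 2 := by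
  rw [← real_inner_self_eq_norm_sq]
  simp only [PiLp.inner_apply, Fin.sum_univ_two, RCLike.inner_apply, conj_trivial]
  ring

/-- If η ≠ 0, |ξ−2η| ≤ |η|/1000 and |ξ₁| < |η₁|/100, then
|∂_{η₂}Φ(ξ,η)| ≥ |η₁|·|η|/(4|ξ−η|⁴). -/
theorem partial_eta2_Phi_lower_bound (ξ η : EuclideanSpace ℝ (Fin 2)) (hη : η ≠ 0)
    (h : ‖ξ - (2 : ℝ) • η‖ ≤ ‖η‖ / 1000) (h1 : |ξ 0| < |η 0| / 100) :
    |η 0| * ‖η‖ / (4 * ‖ξ - η‖ ^ 4) ≤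
      |fderiv ℝ (fun η' => Phi ξ η') η (EuclideanSpace.single 1 1)| := by
  have hr : (0:ℝ) < ‖η‖ := norm_pos_iff.mpr hη
  have hvec : ξ - (2 : ℝ) • η = (ξ - η) - η := by module
  have h' : ‖(ξ - η) - η‖ ≤ ‖η‖ / 1000 := hvec ▸ h
  have hne : ξ - η ≠ 0 := by
    intro h0
    rw [h0, zero_sub, norm_neg] at h'
    linarith
  have ha0 : (0:ℝ) < ‖ξ - η‖ := norm_pos_iff.mpr hne
  have har : |‖ξ - η‖ - ‖η‖| ≤ ‖η‖ / 1000 :=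
    le_trans (abs_norm_sub_norm_le _ _) h'
  have hr2 : η 0 ^ 2 + η 1 ^ 2 = ‖η‖ ^ 2 := (norm_sq_coords η).symm
  have hd : (ξ 0 - 2 * η 0) ^ 2 + (ξ 1 - 2 * η 1) ^ 2 ≤ (‖η‖ / 1000) ^ 2 := by
    have h2 : ‖ξ - (2 : ℝ) • η‖ ^ 2 ≤ (‖η‖ / 1000) ^ 2 :=
      pow_le_pow_left₀ (norm_nonneg _) h 2
    rw [norm_sq_coords] at h2
    simpa [PiLp.sub_apply, PiLp.smul_apply, smul_eq_mul] using h2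
  have key := key_ineq (η 0) (η 1) (ξ 0) (ξ 1) ‖η‖ ‖ξ - η‖ hr ha0 hr2 har hd h1.le
  rw [fderiv_Phi_eval ξ η hne hη]
  have hrefactor : 2 * η 0 * η 1 / ‖η‖ ^ 4 - 2 * (ξ 0 - η 0) * (ξ 1 - η 1) / ‖ξ - η‖ ^ 4
      = (2 * η 0 * η 1 * ‖ξ - η‖ ^ 4 - 2 * (ξ 0 - η 0) * (ξ 1 - η 1) * ‖η‖ ^ 4)
        / (‖ξ - η‖ ^ 4 * ‖η‖ ^ 4) := by
    field_simp
  rw [hrefactor, abs_div, abs_of_pos (show (0:ℝ) < ‖ξ - η‖ ^ 4 * ‖η‖ ^ 4 by positivity)]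
  rw [div_le_div_iff₀ (by positivity) (by positivity)]
  have hmul := mul_le_mul_of_nonneg_left key
    (show (0:ℝ) ≤ 4 * ‖ξ - η‖ ^ 4 by positivity)
  nlinarith [hmul]
end
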